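/- Define a(n) = Σ_{k=1}^{n-1} (k XOR (n-k)) where XOR is bitwise exclusive-or on nonnegative integers. Then a satisfies a(0)=a(1)=0, a(2n)=2a(n-1)+2a(n)+4n-4 for n ≥ 1, and a(2n+1)=4a(n)+6n for n ≥ 1. -/

import Mathlib

/-- `a n = Σ_{k=1}^{n-1} (k XOR (n-k))`. -/
def aXor (n : ℕ) : ℕ := ∑ k ∈ Finset.Ico 1 n, (k ^^^ (n - k))

private lemma xorEE (a b : ℕ) : (2*a) ^^^ (2*b) = 2*(a ^^^ b) := by
  simpa [Nat.bit] using Nat.xor_bit false a false b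

private lemma xorOO (a b : ℕ) : (2*a+1) ^^^ (2*b+1) = 2*(a ^^^ b) := by
  simpa [Nat.bit] using Nat.xor_bit true a true b

private lemma xorEO (a b : ℕ) : (2*a) ^^^ (2*b+1) = 2*(a ^^^ b)+1 := by
  simpa [Nat.bit] using Nat.xor_bit false a true b

private lemma xorOE (a b : ℕ) : (2*a+1) ^^^ (2*b) = 2*(a ^^^ b)+1 := by
  simpa [Nat.bit] using Nat.xor_bit true a false b

private lemma sum_even_odd (f : ℕ → ℕ) (N : ℕ) :
    ∑ k ∈ Finset.range (2*N), f k = ∑ j ∈ Finset.range N, (f (2*j) + f (2*j+1)) := by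
  induction N with
  | zero => simp
  | succ n ih =>
    have h : 2*(n+1) = 2*n + 1 + 1 := by ring
    rw [h, Finset.sum_range_succ, Finset.sum_range_succ, Finset.sum_range_succ, ih]
    ring

/-- The symmetric full sum `Σ_{k=0}^{n} (k XOR (n-k))`. -/
private def bX (n : ℕ) : ℕ := ∑ k ∈ Finset.range (n+1), (k ^^^ (n - k))

private lemma hb : ∀ m : ℕ, bX m = aXor m + 2*m := by
  intro m
  cases m with
  | zero => simp [bX, aXor]
  | succ t =>
    have h0 : (0:ℕ) < t+2 := by omega
    have h1 : (1:ℕ) ≤ t+1 := by omega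
    rw [bX, Finset.range_eq_Ico, Finset.sum_eq_sum_Ico_succ_bot h0,
      Finset.sum_Ico_succ_top h1]
    simp [aXor]
    omega

private lemma beven (t : ℕ) : bX (2*(t+1)) = 2 * bX (t+1) + 2 * bX t := by
  have key : ∑ j ∈ Finset.range (t+1),
      (((2*j) ^^^ (2*(t+1) - 2*j)) + ((2*j+1) ^^^ (2*(t+1) - (2*j+1)))) =
      ∑ j ∈ Finset.range (t+1), (2*(j ^^^ (t+1-j)) + 2*(j ^^^ (t-j))) := by
    refine Finset.sum_congr rfl fun j hj => ?_
    have hjt : j < t+1 := Finset.mem_range.mp hj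
    have e1 : 2*(t+1) - 2*j = 2*(t+1-j) := by omega
    have e2 : 2*(t+1) - (2*j+1) = 2*(t-j)+1 := by omega
    rw [e1, e2, xorEE, xorOO]
  have hsplit : ∑ j ∈ Finset.range (t+1), (2*(j ^^^ (t+1-j)) + 2*(j ^^^ (t-j))) =
      2 * ∑ j ∈ Finset.range (t+1), (j ^^^ (t+1-j)) +
      2 * ∑ j ∈ Finset.range (t+1), (j ^^^ (t-j)) := by
    rw [Finset.sum_add_distrib, Finset.mul_sum, Finset.mul_sum]
  have hb1 : bX (t+1) = ∑ j ∈ Finset.range (t+1), (j ^^^ (t+1-j)) + (t+1) := by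
    rw [bX, Finset.sum_range_succ]; simp
  have hb2 : bX t = ∑ j ∈ Finset.range (t+1), (j ^^^ (t-j)) := rfl
  have : bX (2*(t+1)) = ∑ k ∈ Finset.range (2*(t+1)), (k ^^^ (2*(t+1) - k)) + 2*(t+1) := by
    rw [bX, Finset.sum_range_succ]; simp
  rw [this, sum_even_odd, key, hsplit]
  omega

private lemma bodd (m : ℕ) : bX (2*m+1) = 4 * bX m + 2*(m+1) := by
  have key : ∑ j ∈ Finset.range (m+1),
      (((2*j) ^^^ (2*m+1 - 2*j)) + ((2*j+1) ^^^ (2*m+1 - (2*j+1)))) =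
      ∑ j ∈ Finset.range (m+1), (4*(j ^^^ (m-j)) + 2) := by
    refine Finset.sum_congr rfl fun j hj => ?_
    have hjm : j < m+1 := Finset.mem_range.mp hj
    have e1 : 2*m+1 - 2*j = 2*(m-j)+1 := by omega
    have e2 : 2*m+1 - (2*j+1) = 2*(m-j) := by omega
    rw [e1, e2, xorEO, xorOE]
    ring
  have hsplit : ∑ j ∈ Finset.range (m+1), (4*(j ^^^ (m-j)) + 2) =
      4 * ∑ j ∈ Finset.range (m+1), (j ^^^ (m-j)) + 2*(m+1) := by
    rw [Finset.sum_add_distrib, Finset.mul_sum]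
    simp [Nat.mul_comm]
  have hb2 : bX m = ∑ j ∈ Finset.range (m+1), (j ^^^ (m-j)) := rfl
  have h2 : (2*m+1)+1 = 2*(m+1) := by ring
  rw [bX, h2, sum_even_odd]
  have h3 : ∀ j, 2*(m+1) - 1 - (2*j) = 2*m+1 - 2*j := fun j => by omega
  have h4 : ∀ j, 2*(m+1) - 1 - (2*j+1) = 2*m+1 - (2*j+1) := fun j => by omega
  calc ∑ j ∈ Finset.range (m+1),
        (((2*j) ^^^ (2*m+1 - 2*j)) + ((2*j+1) ^^^ (2*m+1 - (2*j+1))))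
      = 4 * bX m + 2*(m+1) := by rw [key, hsplit, hb2]

theorem stmt19 :
    aXor 0 = 0 ∧ aXor 1 = 0 ∧
    (∀ n : ℕ, 1 ≤ n → aXor (2 * n) = 2 * aXor (n - 1) + 2 * aXor n + 4 * n - 4) ∧
    (∀ n : ℕ, 1 ≤ n → aXor (2 * n + 1) = 4 * aXor n + 6 * n) := by
  refine ⟨by simp [aXor], by simp [aXor], ?_, ?_⟩
  · intro n hn
    obtain ⟨t, rfl⟩ : ∃ t, n = t+1 := ⟨n-1, by omega⟩
    have h1 := beven t
    have h2 := hb (2*(t+1))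
    have h3 := hb (t+1)
    have h4 := hb t
    simp only [Nat.add_sub_cancel]
    omega
  · intro n hn
    have h1 := bodd n
    have h2 := hb (2*n+1)
    have h3 := hb n
    omega
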